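/- Let θ > 0, θ₀ > 0, Ω_R > 0, Ω_M ∈ ℝ, c ∈ ℝ, and set α = Ω_R·cosh²θ₀. Define Ω_D·D(θ) = tanh²θ₀·[1 + (1−α)/sinh²θ − α·Ω_M/(Ω_R^{3/4}·(α−Ω_R)^{1/4}·sinh^{3/2}θ)] + c·sinhθ/sinhθ₀. Then the Friedmann balance identity holds: tanh²θ₀·coth²θ = Ω_R·(sinhθ₀/sinhθ)² + Ω_M·(sinhθ₀/sinhθ)^{3/2} + Ω_D·D(θ) − c·(sinhθ/sinhθ₀). -/

import Mathlib

/-- The Friedmann balance identity determining the dark fluid function `Ω_D D(θ)` in the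
constant-curvature Robertson-Walker model of Conformal Killing gravity:
`H²/H₀² = tanh²θ₀ coth²θ` equals the sum of radiation, matter, dark fluid and conformal
Killing contributions, with `α = Ω_R cosh²θ₀`. -/
theorem friedmann_balance_identity
    (θ θ₀ ΩR ΩM c : ℝ) (hθ : θ > 0) (hθ₀ : θ₀ > 0) (hΩR : ΩR > 0)
    (α : ℝ) (hα : α = ΩR * Real.cosh θ₀ ^ 2)
    (ΩDD : ℝ)
    (hΩDD : ΩDD = Real.tanh θ₀ ^ 2 * (1 + (1 - α) / Real.sinh θ ^ 2
        - α * ΩM / (ΩR ^ ((3:ℝ)/4) * (α - ΩR) ^ ((1:ℝ)/4) * Real.sinh θ ^ ((3:ℝ)/2)))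
      + c * Real.sinh θ / Real.sinh θ₀) :
    Real.tanh θ₀ ^ 2 * (Real.cosh θ / Real.sinh θ) ^ 2
      = ΩR * (Real.sinh θ₀ / Real.sinh θ) ^ 2
        + ΩM * (Real.sinh θ₀ / Real.sinh θ) ^ ((3:ℝ)/2)
        + ΩDD - c * (Real.sinh θ / Real.sinh θ₀) := by
  have hs : Real.sinh θ > 0 := Real.sinh_pos_iff.mpr hθ
  have hs0 : Real.sinh θ₀ > 0 := Real.sinh_pos_iff.mpr hθ₀
  have hch : Real.cosh θ₀ > 0 := Real.cosh_pos θ₀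
  have hcsq : Real.cosh θ₀ ^ 2 = 1 + Real.sinh θ₀ ^ 2 := Real.cosh_sq' θ₀
  have hcsqθ : Real.cosh θ ^ 2 = 1 + Real.sinh θ ^ 2 := Real.cosh_sq' θ
  set s := Real.sinh θ with hsdef
  set s₀ := Real.sinh θ₀ with hs0def
  have hαΩ : α - ΩR = ΩR * s₀ ^ 2 := by rw [hα, hcsq]; ring
  -- rpow facts
  have hu : s₀ ^ ((1:ℝ)/2) > 0 := Real.rpow_pos_of_pos hs0 _
  have hv : s ^ ((1:ℝ)/2) > 0 := Real.rpow_pos_of_pos hs _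
  have hu2 : s₀ ^ ((1:ℝ)/2) * s₀ ^ ((1:ℝ)/2) = s₀ := by
    rw [← Real.rpow_add hs0]; norm_num
  have hv2 : s ^ ((1:ℝ)/2) * s ^ ((1:ℝ)/2) = s := by
    rw [← Real.rpow_add hs]; norm_num
  have h14 : (α - ΩR) ^ ((1:ℝ)/4) = ΩR ^ ((1:ℝ)/4) * s₀ ^ ((1:ℝ)/2) := by
    rw [hαΩ, Real.mul_rpow hΩR.le (sq_nonneg s₀)]
    congr 1
    rw [← Real.rpow_natCast s₀ 2, ← Real.rpow_mul hs0.le]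
    norm_num
  have h34 : ΩR ^ ((3:ℝ)/4) * ΩR ^ ((1:ℝ)/4) = ΩR := by
    rw [← Real.rpow_add hΩR]; norm_num
  have h32 : ∀ x : ℝ, 0 < x → x ^ ((3:ℝ)/2) = x * x ^ ((1:ℝ)/2) := by
    intro x hx
    rw [show (3:ℝ)/2 = 1 + 1/2 by norm_num, Real.rpow_add hx, Real.rpow_one]
  have hdiv32 : (s₀ / s) ^ ((3:ℝ)/2) = (s₀ * s₀ ^ ((1:ℝ)/2)) / (s * s ^ ((1:ℝ)/2)) := by
    rw [Real.div_rpow hs0.le hs.le, h32 s₀ hs0, h32 s hs]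
  have htanh : Real.tanh θ₀ = s₀ / Real.cosh θ₀ := Real.tanh_eq_sinh_div_cosh θ₀
  rw [hΩDD, h14, h32 s hs, htanh, hdiv32]
  set ch := Real.cosh θ₀ with hchdef
  set_option maxHeartbeats 1000000 in
  field_simp
  ring_nf
  linear_combination
    (s₀^3*s₀^((1:ℝ)/2)*s^((1:ℝ)/2)*ΩR^((3:ℝ)/4)*ΩR^((1:ℝ)/4)) * hcsqθ
    + (s₀^3*s₀^((1:ℝ)/2)*s^((1:ℝ)/2)*ΩR^((3:ℝ)/4)*ΩR^((1:ℝ)/4) + s₀^3*s*ΩM) * hα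
    - (s₀^2*ch^2*s*ΩM*ΩR^((3:ℝ)/4)*ΩR^((1:ℝ)/4)) * hu2
    - (s₀^3*ch^2*s*ΩM) * h34
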